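/- RAPPOR's permanent randomized response satisfies ε-LDP with ε = 2·ln((1−r/2)/(r/2)) per bit pair: for a single bit B[v], generating B₁[v]=1 with probability 1−r/2 if B[v]=1 and with probability r/2 if B[v]=0 (0 < r < 1), the ratio of output probabilities over any two length-k inputs differing in at most 2 bits is bounded by ((1−r/2)/(r/2))², i.e., the k-bit mechanism applied to one-hot encodings satisfies 2·ln((1−r/2)/(r/2))-LDP. -/
import Mathlib

theorem rappor_prr_ldp (k : ℕ) (r : ℝ) (hr0 : 0 < r) (hr1 : r < 1)
    (P : (Fin k → Bool) → (Fin k → Bool) → ℝ)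
    (hP : ∀ B y, P B y = ∏ i,
      (if y i then (if B i then 1 - r / 2 else r / 2)
       else (if B i then r / 2 else 1 - r / 2))) :
    ∀ B B' : Fin k → Bool, (∃! i, B i = true) → (∃! i, B' i = true) →
      ∀ y, P B y ≤ Real.exp (2 * Real.log ((1 - r / 2) / (r / 2))) * P B' y := by
  set a := 1 - r / 2 with ha
  set b := r / 2 with hb
  have hb0 : 0 < b := by positivity
  have hba : b ≤ a := by simp only [ha, hb]; linarith
  have ha0 : 0 < a := lt_of_lt_of_le hb0 hba
  have hexp : Real.exp (2 * Real.log (a / b)) = (a / b) ^ 2 := by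
    rw [show (2 : ℝ) * Real.log (a / b) = Real.log ((a/b)^2) by
        rw [Real.log_pow]; push_cast; ring,
      Real.exp_log (by positivity)]
  intro B B' hB hB' y
  have key : ∀ C : Fin k → Bool, (∃! i, C i = true) →
      (P C y ≤ (a / b) * ∏ j, (if y j then b else a) ∧
       (∏ j, (if y j then b else a)) ≤ (a / b) * P C y) := by
    intro C hC
    obtain ⟨i, hi, huniq⟩ := hC
    set f : Fin k → ℝ := fun j =>
      (if y j then (if C j then a else b) else (if C j then b else a)) with hf
    set g : Fin k → ℝ := fun j => (if y j then b else a) with hg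
    have hPf : P C y = f i * ∏ j ∈ Finset.univ.erase i, f j := by
      rw [hP]
      exact (Finset.mul_prod_erase Finset.univ f (Finset.mem_univ i)).symm
    have hQg : (∏ j, g j) = g i * ∏ j ∈ Finset.univ.erase i, g j :=
      (Finset.mul_prod_erase Finset.univ g (Finset.mem_univ i)).symm
    have heq : ∏ j ∈ Finset.univ.erase i, f j = ∏ j ∈ Finset.univ.erase i, g j := by
      refine Finset.prod_congr rfl fun j hj => ?_
      have hji : j ≠ i := Finset.ne_of_mem_erase hj
      have hCj : C j = false := by
        by_contra h
        exact hji (huniq j (by simpa using h))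
      simp [hf, hg, hCj]
    have hR : 0 ≤ ∏ j ∈ Finset.univ.erase i, g j := by
      refine Finset.prod_nonneg fun j _ => ?_
      simp only [hg]
      split <;> positivity
    have hCi : C i = true := hi
    constructor
    · rw [hPf, hQg, heq, ← mul_assoc]
      refine mul_le_mul_of_nonneg_right ?_ hR
      simp only [hf, hg, hCi, if_true]
      rcases em (y i = true) with h | h
      · simp only [h, if_true]
        rw [div_mul_cancel₀ _ hb0.ne']
      · simp only [h, Bool.false_eq_true, if_false]
        rw [div_mul_eq_mul_div, le_div_iff₀ hb0]
        nlinarith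
    · rw [hPf, hQg, heq, ← mul_assoc]
      refine mul_le_mul_of_nonneg_right ?_ hR
      simp only [hf, hg, hCi, if_true]
      rcases em (y i = true) with h | h
      · simp only [h, if_true]
        rw [div_mul_eq_mul_div, le_div_iff₀ hb0]
        nlinarith
      · simp only [h, Bool.false_eq_true, if_false]
        rw [div_mul_cancel₀ _ hb0.ne']
  obtain ⟨h1, _⟩ := key B hB
  obtain ⟨_, h2⟩ := key B' hB'
  rw [hexp]
  calc P B y ≤ (a/b) * ∏ j, (if y j then b else a) := h1
    _ ≤ (a/b) * ((a/b) * P B' y) :=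
        mul_le_mul_of_nonneg_left h2 (by positivity)
    _ = (a/b)^2 * P B' y := by ring
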